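/- Under Assumption 1, the robust value function is Lipschitz in the policy parameter: for all θ₁, θ₂ ∈ Θ and every s ∈ S, |V^{π_{θ₁}}(s) − V^{π_{θ₂}}(s)| ≤ (k_π·|A|/(1−γ)²)·‖θ₁ − θ₂‖. -/

import Mathlib

set_option autoImplicit false

open Finset

/-- sup' difference bound. -/
lemma sup'_sub_sup'_le {S : Type*} [Fintype S] [Nonempty S] (f g : S → ℝ) (M : ℝ)
    (h : ∀ s, f s - g s ≤ M) :
    univ.sup' univ_nonempty f - univ.sup' univ_nonempty g ≤ M := by
  rw [sub_le_iff_le_add]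
  apply Finset.sup'_le
  intro s _
  have := Finset.le_sup' g (Finset.mem_univ s)
  linarith [h s]

lemma abs_sup'_sub_sup'_le {S : Type*} [Fintype S] [Nonempty S] (f g : S → ℝ) (M : ℝ)
    (h : ∀ s, |f s - g s| ≤ M) :
    |univ.sup' univ_nonempty f - univ.sup' univ_nonempty g| ≤ M := by
  rw [abs_le]
  constructor
  · have := sup'_sub_sup'_le g f M (fun s => by have := abs_le.mp (h s); linarith [this.1])
    linarith
  · exact sup'_sub_sup'_le f g M (fun s => (abs_le.mp (h s)).2)

/-- **Lipschitz continuity of the robust value function in the policy parameter**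
(Lemma 4 / Assumption 1 setting): if `θ ↦ π_θ(a|s)` is differentiable on the convex set
`Θ ⊆ ℝ^N` with gradients bounded by `k_π`, and `V θ` is the robust value function of `π_θ`
(the fixed point of the robust Bellman operator), then for all `θ₁, θ₂ ∈ Θ` and `s ∈ S`,
`|V^{π_{θ₁}}(s) - V^{π_{θ₂}}(s)| ≤ (k_π·|A|/(1-γ)²)·‖θ₁ - θ₂‖`. -/
theorem stmt_3 {S A : Type*} [Fintype S] [Fintype A] [Nonempty S] [Nonempty A] {N : ℕ}
    (c : S → A → ℝ) (hc : ∀ s a, c s a ∈ Set.Icc (0 : ℝ) 1)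
    (γ : ℝ) (hγ : γ ∈ Set.Ico (0 : ℝ) 1)
    (R : ℝ) (hR : R ∈ Set.Icc (0 : ℝ) 1)
    (p : S → A → S → ℝ) (hp : ∀ s a, p s a ∈ stdSimplex ℝ S)
    (Θ : Set (EuclideanSpace ℝ (Fin N))) (hΘ : Convex ℝ Θ)
    (π : EuclideanSpace ℝ (Fin N) → S → A → ℝ)
    (hπ : ∀ θ ∈ Θ, ∀ s, π θ s ∈ stdSimplex ℝ A)
    (kπ : ℝ) (hkπ : 0 < kπ)
    (D : EuclideanSpace ℝ (Fin N) → S → A → EuclideanSpace ℝ (Fin N))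
    (hD : ∀ θ ∈ Θ, ∀ s a, HasGradientWithinAt (fun θ' => π θ' s a) (D θ s a) Θ θ)
    (hDb : ∀ θ ∈ Θ, ∀ s a, ‖D θ s a‖ ≤ kπ)
    (V : EuclideanSpace ℝ (Fin N) → S → ℝ)
    (hV : ∀ θ ∈ Θ, ∀ s, V θ s = ∑ a, π θ s a * (c s a
      + γ * (1 - R) * ∑ s', p s a s' * V θ s'
      + γ * R * univ.sup' univ_nonempty (V θ)))
    (θ₁ θ₂ : EuclideanSpace ℝ (Fin N)) (h₁ : θ₁ ∈ Θ) (h₂ : θ₂ ∈ Θ) (s : S) :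
    |V θ₁ s - V θ₂ s| ≤ kπ * Fintype.card A / (1 - γ) ^ 2 * ‖θ₁ - θ₂‖ := by
  obtain ⟨hγ0, hγ1⟩ := hγ
  have h1γ : 0 < 1 - γ := by linarith
  -- Lipschitz bound on the policy
  have hπlip : ∀ s a, |π θ₁ s a - π θ₂ s a| ≤ kπ * ‖θ₁ - θ₂‖ := by
    intro s a
    have := hΘ.norm_image_sub_le_of_norm_hasFDerivWithin_le
      (f := fun θ' => π θ' s a) (f' := fun θ => InnerProductSpace.toDual ℝ _ (D θ s a))
      (fun θ hθ => (hD θ hθ s a).hasFDerivWithinAt)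
      (fun θ hθ => by
        rw [LinearIsometryEquiv.norm_map]; exact hDb θ hθ s a) h₂ h₁
    simpa [Real.norm_eq_abs] using this
  -- bound on V : |V θ s| ≤ 1/(1-γ) for θ ∈ Θ
  have hVb : ∀ θ ∈ Θ, ∀ s, |V θ s| ≤ 1 / (1 - γ) := by
    intro θ hθ s
    set B : ℝ := univ.sup' univ_nonempty (fun s => |V θ s|) with hB
    have hBs : ∀ s', |V θ s'| ≤ B := fun s' =>
      Finset.le_sup' (fun s => |V θ s|) (Finset.mem_univ s')
    have hB0 : 0 ≤ B := le_trans (abs_nonneg _) (hBs s)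
    have hmax : |univ.sup' univ_nonempty (V θ)| ≤ B := by
      rw [abs_le]
      constructor
      · obtain ⟨s₀⟩ := ‹Nonempty S›
        have := Finset.le_sup' (V θ) (Finset.mem_univ s₀)
        have := (abs_le.mp (hBs s₀)).1
        linarith
      · apply Finset.sup'_le
        intro s' _
        exact le_trans (le_abs_self _) (hBs s')
    have key : ∀ s', |V θ s'| ≤ 1 + γ * B := by
      intro s'
      rw [hV θ hθ s']
      calc |∑ a, π θ s' a * (c s' a + γ * (1 - R) * ∑ s'', p s' a s'' * V θ s''
              + γ * R * univ.sup' univ_nonempty (V θ))|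
          ≤ ∑ a, |π θ s' a * (c s' a + γ * (1 - R) * ∑ s'', p s' a s'' * V θ s''
              + γ * R * univ.sup' univ_nonempty (V θ))| := Finset.abs_sum_le_sum_abs _ _
        _ ≤ ∑ a, π θ s' a * (1 + γ * B) := by
            apply Finset.sum_le_sum
            intro a _
            rw [abs_mul, abs_of_nonneg ((hπ θ hθ s').1 a)]
            apply mul_le_mul_of_nonneg_left _ ((hπ θ hθ s').1 a)
            have hps : |∑ s'', p s' a s'' * V θ s''| ≤ B := by
              calc |∑ s'', p s' a s'' * V θ s''| ≤ ∑ s'', |p s' a s'' * V θ s''| :=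
                    Finset.abs_sum_le_sum_abs _ _
                _ ≤ ∑ s'', p s' a s'' * B := by
                    apply Finset.sum_le_sum
                    intro s'' _
                    rw [abs_mul, abs_of_nonneg ((hp s' a).1 s'')]
                    exact mul_le_mul_of_nonneg_left (hBs s'') ((hp s' a).1 s'')
                _ = B := by rw [← Finset.sum_mul, (hp s' a).2, one_mul]
            calc |c s' a + γ * (1 - R) * ∑ s'', p s' a s'' * V θ s''
                  + γ * R * univ.sup' univ_nonempty (V θ)|
                ≤ |c s' a| + |γ * (1 - R) * ∑ s'', p s' a s'' * V θ s''|
                  + |γ * R * univ.sup' univ_nonempty (V θ)| := by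
                  exact (abs_add_le _ _).trans (by gcongr; exact abs_add_le _ _)
              _ ≤ 1 + γ * (1 - R) * B + γ * R * B := by
                  gcongr
                  · rw [abs_le]; constructor <;> [linarith [(hc s' a).1]; exact (hc s' a).2]
                  · rw [abs_mul, abs_of_nonneg (by nlinarith [hR.1, hR.2] : (0:ℝ) ≤ γ * (1 - R))]
                    exact mul_le_mul_of_nonneg_left hps (by nlinarith [hR.1, hR.2])
                  · rw [abs_mul, abs_of_nonneg (by nlinarith [hR.1, hR.2] : (0:ℝ) ≤ γ * R)]
                    exact mul_le_mul_of_nonneg_left hmax (by nlinarith [hR.1, hR.2])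
              _ = 1 + γ * B := by ring
        _ = 1 + γ * B := by rw [← Finset.sum_mul, (hπ θ hθ s').2, one_mul]
    have hBle : B ≤ 1 + γ * B := by
      apply Finset.sup'_le
      intro s' _
      exact key s'
    calc |V θ s| ≤ B := hBs s
      _ ≤ 1 / (1 - γ) := by rw [le_div_iff₀ h1γ]; nlinarith
  -- main estimate
  set M : ℝ := univ.sup' univ_nonempty (fun s => |V θ₁ s - V θ₂ s|) with hM
  have hMs : ∀ s', |V θ₁ s' - V θ₂ s'| ≤ M := fun s' =>
    Finset.le_sup' (fun s => |V θ₁ s - V θ₂ s|) (Finset.mem_univ s')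
  set L : ℝ := ‖θ₁ - θ₂‖ with hL
  have hL0 : 0 ≤ L := norm_nonneg _
  have key : ∀ s', |V θ₁ s' - V θ₂ s'| ≤ kπ * Fintype.card A / (1 - γ) * L + γ * M := by
    intro s'
    have hQ1 : ∀ a, |c s' a + γ * (1 - R) * ∑ s'', p s' a s'' * V θ₁ s''
        + γ * R * univ.sup' univ_nonempty (V θ₁)| ≤ 1 / (1 - γ) := by
      intro a
      have hps : |∑ s'', p s' a s'' * V θ₁ s''| ≤ 1 / (1 - γ) := by
        calc |∑ s'', p s' a s'' * V θ₁ s''| ≤ ∑ s'', |p s' a s'' * V θ₁ s''| :=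
              Finset.abs_sum_le_sum_abs _ _
          _ ≤ ∑ s'', p s' a s'' * (1 / (1 - γ)) := by
              apply Finset.sum_le_sum
              intro s'' _
              rw [abs_mul, abs_of_nonneg ((hp s' a).1 s'')]
              exact mul_le_mul_of_nonneg_left (hVb θ₁ h₁ s'') ((hp s' a).1 s'')
          _ = 1 / (1 - γ) := by rw [← Finset.sum_mul, (hp s' a).2, one_mul]
      have hmax : |univ.sup' univ_nonempty (V θ₁)| ≤ 1 / (1 - γ) := by
        rw [abs_le]
        constructor
        · obtain ⟨s₀⟩ := ‹Nonempty S›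
          have := Finset.le_sup' (V θ₁) (Finset.mem_univ s₀)
          have := (abs_le.mp (hVb θ₁ h₁ s₀)).1
          linarith
        · exact Finset.sup'_le _ _ fun s'' _ =>
            le_trans (le_abs_self _) (hVb θ₁ h₁ s'')
      calc |c s' a + γ * (1 - R) * ∑ s'', p s' a s'' * V θ₁ s''
            + γ * R * univ.sup' univ_nonempty (V θ₁)|
          ≤ |c s' a| + |γ * (1 - R) * ∑ s'', p s' a s'' * V θ₁ s''|
            + |γ * R * univ.sup' univ_nonempty (V θ₁)| :=
            (abs_add_le _ _).trans (by gcongr; exact abs_add_le _ _)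
        _ ≤ 1 + γ * (1 - R) * (1 / (1 - γ)) + γ * R * (1 / (1 - γ)) := by
            gcongr
            · rw [abs_le]; constructor <;> [linarith [(hc s' a).1]; exact (hc s' a).2]
            · rw [abs_mul, abs_of_nonneg (by nlinarith [hR.1, hR.2] : (0:ℝ) ≤ γ * (1 - R))]
              exact mul_le_mul_of_nonneg_left hps (by nlinarith [hR.1, hR.2])
            · rw [abs_mul, abs_of_nonneg (by nlinarith [hR.1, hR.2] : (0:ℝ) ≤ γ * R)]
              exact mul_le_mul_of_nonneg_left hmax (by nlinarith [hR.1, hR.2])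
        _ = 1 / (1 - γ) := by field_simp; ring
    have hQd : ∀ a, |(γ * (1 - R) * ∑ s'', p s' a s'' * V θ₁ s''
        + γ * R * univ.sup' univ_nonempty (V θ₁))
        - (γ * (1 - R) * ∑ s'', p s' a s'' * V θ₂ s''
        + γ * R * univ.sup' univ_nonempty (V θ₂))| ≤ γ * M := by
      intro a
      have hps : |(∑ s'', p s' a s'' * V θ₁ s'') - ∑ s'', p s' a s'' * V θ₂ s''| ≤ M := by
        rw [← Finset.sum_sub_distrib]
        calc |∑ s'', (p s' a s'' * V θ₁ s'' - p s' a s'' * V θ₂ s'')|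
            ≤ ∑ s'', |p s' a s'' * V θ₁ s'' - p s' a s'' * V θ₂ s''| :=
              Finset.abs_sum_le_sum_abs _ _
          _ ≤ ∑ s'', p s' a s'' * M := by
              apply Finset.sum_le_sum
              intro s'' _
              rw [← mul_sub, abs_mul, abs_of_nonneg ((hp s' a).1 s'')]
              exact mul_le_mul_of_nonneg_left (hMs s'') ((hp s' a).1 s'')
          _ = M := by rw [← Finset.sum_mul, (hp s' a).2, one_mul]
      have hmaxd : |univ.sup' univ_nonempty (V θ₁) - univ.sup' univ_nonempty (V θ₂)| ≤ M :=
        abs_sup'_sub_sup'_le (V θ₁) (V θ₂) M hMs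
      have hgR1 : (0:ℝ) ≤ γ * (1 - R) := by nlinarith [hR.1, hR.2]
      have hgR2 : (0:ℝ) ≤ γ * R := by nlinarith [hR.1, hR.2]
      calc |(γ * (1 - R) * ∑ s'', p s' a s'' * V θ₁ s''
            + γ * R * univ.sup' univ_nonempty (V θ₁))
            - (γ * (1 - R) * ∑ s'', p s' a s'' * V θ₂ s''
            + γ * R * univ.sup' univ_nonempty (V θ₂))|
          = |γ * (1 - R) * ((∑ s'', p s' a s'' * V θ₁ s'') - ∑ s'', p s' a s'' * V θ₂ s'')
            + γ * R * (univ.sup' univ_nonempty (V θ₁) - univ.sup' univ_nonempty (V θ₂))| := by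
            ring_nf
        _ ≤ |γ * (1 - R) * ((∑ s'', p s' a s'' * V θ₁ s'') - ∑ s'', p s' a s'' * V θ₂ s'')|
            + |γ * R * (univ.sup' univ_nonempty (V θ₁) - univ.sup' univ_nonempty (V θ₂))| :=
            abs_add_le _ _
        _ ≤ γ * (1 - R) * M + γ * R * M := by
            gcongr
            · rw [abs_mul, abs_of_nonneg hgR1]
              exact mul_le_mul_of_nonneg_left hps hgR1
            · rw [abs_mul, abs_of_nonneg hgR2]
              exact mul_le_mul_of_nonneg_left hmaxd hgR2
        _ = γ * M := by ring
    rw [hV θ₁ h₁ s', hV θ₂ h₂ s']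
    have expand : (∑ a, π θ₁ s' a * (c s' a + γ * (1 - R) * ∑ s'', p s' a s'' * V θ₁ s''
        + γ * R * univ.sup' univ_nonempty (V θ₁)))
        - (∑ a, π θ₂ s' a * (c s' a + γ * (1 - R) * ∑ s'', p s' a s'' * V θ₂ s''
        + γ * R * univ.sup' univ_nonempty (V θ₂)))
        = (∑ a, (π θ₁ s' a - π θ₂ s' a) * (c s' a + γ * (1 - R) * ∑ s'', p s' a s'' * V θ₁ s''
          + γ * R * univ.sup' univ_nonempty (V θ₁)))
        + ∑ a, π θ₂ s' a * ((γ * (1 - R) * ∑ s'', p s' a s'' * V θ₁ s''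
          + γ * R * univ.sup' univ_nonempty (V θ₁))
          - (γ * (1 - R) * ∑ s'', p s' a s'' * V θ₂ s''
          + γ * R * univ.sup' univ_nonempty (V θ₂))) := by
      rw [← Finset.sum_add_distrib, ← Finset.sum_sub_distrib]
      apply Finset.sum_congr rfl
      intro a _
      ring
    rw [expand]
    calc _ ≤ |∑ a, (π θ₁ s' a - π θ₂ s' a) * (c s' a
          + γ * (1 - R) * ∑ s'', p s' a s'' * V θ₁ s''
          + γ * R * univ.sup' univ_nonempty (V θ₁))|
          + |∑ a, π θ₂ s' a * ((γ * (1 - R) * ∑ s'', p s' a s'' * V θ₁ s''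
          + γ * R * univ.sup' univ_nonempty (V θ₁))
          - (γ * (1 - R) * ∑ s'', p s' a s'' * V θ₂ s''
          + γ * R * univ.sup' univ_nonempty (V θ₂)))| := abs_add_le _ _
      _ ≤ kπ * Fintype.card A / (1 - γ) * L + γ * M := by
        gcongr
        · calc |∑ a, (π θ₁ s' a - π θ₂ s' a) * (c s' a
              + γ * (1 - R) * ∑ s'', p s' a s'' * V θ₁ s''
              + γ * R * univ.sup' univ_nonempty (V θ₁))|
              ≤ ∑ a, |(π θ₁ s' a - π θ₂ s' a) * (c s' a
                + γ * (1 - R) * ∑ s'', p s' a s'' * V θ₁ s''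
                + γ * R * univ.sup' univ_nonempty (V θ₁))| := Finset.abs_sum_le_sum_abs _ _
            _ ≤ ∑ _a : A, kπ * L * (1 / (1 - γ)) := by
                apply Finset.sum_le_sum
                intro a _
                rw [abs_mul]
                exact mul_le_mul (hπlip s' a) (hQ1 a) (abs_nonneg _)
                  (by positivity)
            _ = kπ * Fintype.card A / (1 - γ) * L := by
                rw [Finset.sum_const, Finset.card_univ, nsmul_eq_mul]
                field_simp
        · calc |∑ a, π θ₂ s' a * ((γ * (1 - R) * ∑ s'', p s' a s'' * V θ₁ s''
              + γ * R * univ.sup' univ_nonempty (V θ₁))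
              - (γ * (1 - R) * ∑ s'', p s' a s'' * V θ₂ s''
              + γ * R * univ.sup' univ_nonempty (V θ₂)))|
              ≤ ∑ a, |π θ₂ s' a * ((γ * (1 - R) * ∑ s'', p s' a s'' * V θ₁ s''
                + γ * R * univ.sup' univ_nonempty (V θ₁))
                - (γ * (1 - R) * ∑ s'', p s' a s'' * V θ₂ s''
                + γ * R * univ.sup' univ_nonempty (V θ₂)))| := Finset.abs_sum_le_sum_abs _ _
            _ ≤ ∑ a, π θ₂ s' a * (γ * M) := by
                apply Finset.sum_le_sum
                intro a _
                rw [abs_mul, abs_of_nonneg ((hπ θ₂ h₂ s').1 a)]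
                exact mul_le_mul_of_nonneg_left (hQd a) ((hπ θ₂ h₂ s').1 a)
            _ = γ * M := by rw [← Finset.sum_mul, (hπ θ₂ h₂ s').2, one_mul]
  have hMle : M ≤ kπ * Fintype.card A / (1 - γ) * L + γ * M :=
    Finset.sup'_le _ _ fun s' _ => key s'
  have hMfin : M ≤ kπ * Fintype.card A / (1 - γ) ^ 2 * L := by
    have hcard : (0:ℝ) < Fintype.card A := by
      exact_mod_cast Fintype.card_pos
    rw [div_mul_eq_mul_div, le_div_iff₀ (by positivity)]
    have : M * (1 - γ) ≤ kπ * Fintype.card A / (1 - γ) * L := by linarith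
    calc M * (1 - γ) ^ 2 = M * (1 - γ) * (1 - γ) := by ring
      _ ≤ (kπ * Fintype.card A / (1 - γ) * L) * (1 - γ) :=
          mul_le_mul_of_nonneg_right this (le_of_lt h1γ)
      _ = kπ * Fintype.card A * L := by field_simp
  exact le_trans (hMs s) hMfin
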